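/- On ℝ with density f, define V(x) = ∫₀ˣ f. Then f is a log-convex function of x if and only if f, viewed as a function of the volume coordinate V, is convex. -/

import Mathlib

open Set

/-- A convex function on `ℝ` has a monotone right derivative. -/
lemma exists_right_deriv_of_convexOn (h : ℝ → ℝ) (hcv : ConvexOn ℝ Set.univ h) :
    ∃ r : ℝ → ℝ, Monotone r ∧ ∀ x, HasDerivWithinAt h (r x) (Set.Ici x) x := by
  have hsl : ∀ x : ℝ, MonotoneOn (slope h x) (Set.univ \ {x}) := fun x =>
    hcv.slope_mono (Set.mem_univ x)
  have hmem : ∀ x y : ℝ, y ≠ x → y ∈ Set.univ \ ({x} : Set ℝ) := fun x y hy =>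
    ⟨Set.mem_univ y, by simpa using hy⟩
  have hbdd : ∀ x : ℝ, BddBelow (slope h x '' Set.Ioi x) := by
    intro x
    refine ⟨slope h x (x - 1), ?_⟩
    rintro _ ⟨y, hy, rfl⟩
    exact hsl x (hmem x (x - 1) (by linarith)) (hmem x y (ne_of_gt hy))
      (by linarith [mem_Ioi.1 hy])
  have hne : ∀ x : ℝ, (slope h x '' Set.Ioi x).Nonempty := fun x =>
    ⟨slope h x (x + 1), Set.mem_image_of_mem _ (by simp : x + 1 ∈ Set.Ioi x)⟩
  refine ⟨fun x => sInf (slope h x '' Set.Ioi x), ?_, ?_⟩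
  · -- monotone
    intro x y hxy
    rcases eq_or_lt_of_le hxy with rfl | hxy
    · exact le_rfl
    have h1 : sInf (slope h x '' Set.Ioi x) ≤ slope h x y :=
      csInf_le (hbdd x) (Set.mem_image_of_mem _ (Set.mem_Ioi.2 hxy))
    have h2 : slope h y x ≤ sInf (slope h y '' Set.Ioi y) := by
      apply le_csInf (hne y)
      rintro _ ⟨z, hz, rfl⟩
      exact hsl y (hmem y x (ne_of_lt hxy)) (hmem y z (ne_of_gt hz))
        (le_of_lt (lt_trans hxy hz))
    rw [slope_comm] at h2
    exact h1.trans h2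
  · -- right derivative
    intro x
    have hmono : MonotoneOn (slope h x) (Set.Ioi x) :=
      (hsl x).mono fun y hy => hmem x y (ne_of_gt hy)
    have htd : Filter.Tendsto (slope h x) (nhdsWithin x (Set.Ioi x))
        (nhds (sInf (slope h x '' Set.Ioi x))) :=
      hmono.tendsto_nhdsGT (hbdd x)
    have : HasDerivWithinAt h (sInf (slope h x '' Set.Ioi x)) (Set.Ioi x) x := by
      rw [hasDerivWithinAt_iff_tendsto_slope, Set.diff_singleton_eq_self (by simp)]
      exact htd
    exact this.Ici_of_Ioi

/-- A continuous function on `ℝ` with a monotone right derivative is convex. -/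
lemma convexOn_of_right_deriv_mono (h r : ℝ → ℝ) (hc : Continuous h) (hm : Monotone r)
    (hd : ∀ x, HasDerivWithinAt h (r x) (Set.Ici x) x) : ConvexOn ℝ Set.univ h := by
  have key_up : ∀ x y : ℝ, x < y → h y - h x ≤ r y * (y - x) := by
    intro x y hxy
    have := image_le_of_deriv_right_le_deriv_boundary (f := h) (f' := r) (a := x) (b := y)
      hc.continuousOn (fun t _ => hd t)
      (B := fun t => h x + r y * (t - x)) (B' := fun _ => r y)
      (by simp)
      (by fun_prop)
      (fun t _ => (((hasDerivAt_id t).sub_const x).const_mul (r y) |>.const_add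
        (h x)).hasDerivWithinAt.congr_deriv (by ring))
      (fun t ht => hm (le_of_lt ht.2))
      (Set.right_mem_Icc.2 hxy.le)
    have h2 : h y ≤ h x + r y * (y - x) := this
    linarith
  have key_lo : ∀ x y : ℝ, x < y → r x * (y - x) ≤ h y - h x := by
    intro x y hxy
    have := image_le_of_deriv_right_le_deriv_boundary (f := fun t => -h t)
      (f' := fun t => -r t) (a := x) (b := y)
      hc.neg.continuousOn (fun t _ => (hd t).neg)
      (B := fun t => -h x + -r x * (t - x)) (B' := fun _ => -r x)
      (by simp)
      (by fun_prop)
      (fun t _ => (((hasDerivAt_id t).sub_const x).const_mul (-r x) |>.const_add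
        (-h x)).hasDerivWithinAt.congr_deriv (by ring))
      (fun t ht => neg_le_neg (hm ht.1))
      (Set.right_mem_Icc.2 hxy.le)
    have h2 : -h y ≤ -h x + -r x * (y - x) := this
    linarith
  apply convexOn_of_slope_mono_adjacent convex_univ
  intro a b c _ _ hab hbc
  have h1 : (h b - h a) / (b - a) ≤ r b := by
    rw [div_le_iff₀ (by linarith)]
    exact key_up a b hab
  have h2 : r b ≤ (h c - h b) / (c - b) := by
    rw [le_div_iff₀ (by linarith)]
    exact key_lo b c hbc
  exact h1.trans h2

/-- Volume coordinate lemma: for a positive continuous density `f` on `ℝ` with volume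
coordinate `V x = ∫₀ˣ f`, the density `f` is log-convex as a function of `x` if and only
if `f` is convex as a function of the volume coordinate (i.e. `f ∘ V⁻¹` is convex, where
`xOf` is the inverse of `V`). -/
theorem logconvex_iff_convex_in_volume_coordinate (f : ℝ → ℝ)
    (hf_pos : ∀ y, 0 < f y) (hf_cont : Continuous f)
    (V : ℝ → ℝ) (hV : ∀ x, V x = ∫ t in (0:ℝ)..x, f t)
    (xOf : ℝ → ℝ) (hleft : ∀ x, xOf (V x) = x) (hright : ∀ v, V (xOf v) = v) :
    ConvexOn ℝ Set.univ (fun x => Real.log (f x)) ↔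
      ConvexOn ℝ Set.univ (fun v => f (xOf v)) := by
  -- basic facts about V and xOf
  have hVd : ∀ x, HasDerivAt V (f x) x := by
    intro x
    have hVeq : V = fun u => ∫ t in (0:ℝ)..u, f t := funext hV
    rw [hVeq]
    exact intervalIntegral.integral_hasDerivAt_right
      (hf_cont.intervalIntegrable _ _)
      hf_cont.aestronglyMeasurable.stronglyMeasurableAtFilter
      hf_cont.continuousAt
  have hVmono : StrictMono V := by
    intro x y hxy
    have hadd : V x + ∫ t in x..y, f t = V y := by
      rw [hV x, hV y]
      exact intervalIntegral.integral_add_adjacent_intervals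
        (hf_cont.intervalIntegrable _ _) (hf_cont.intervalIntegrable _ _)
    have hpos : 0 < ∫ t in x..y, f t :=
      intervalIntegral.intervalIntegral_pos_of_pos (hf_cont.intervalIntegrable _ _)
        hf_pos hxy
    linarith
  have hxmono : StrictMono xOf := by
    intro v w hvw
    have : V (xOf v) < V (xOf w) := by rw [hright, hright]; exact hvw
    exact hVmono.lt_iff_lt.1 this
  have hxsurj : Function.Surjective xOf := fun x => ⟨V x, hleft x⟩
  have hxcont : Continuous xOf :=
    (StrictMono.orderIsoOfSurjective xOf hxmono hxsurj).continuous
  have hxd : ∀ v, HasDerivAt xOf (f (xOf v))⁻¹ v := fun v =>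
    HasDerivAt.of_local_left_inverse hxcont.continuousAt (hVd (xOf v))
      (ne_of_gt (hf_pos _)) (Filter.Eventually.of_forall hright)
  constructor
  · -- log-convex ⇒ convex in volume coordinate
    intro hu
    obtain ⟨r, hrm, hrd⟩ := exists_right_deriv_of_convexOn _ hu
    -- f = exp ∘ (log ∘ f)
    have hfd : ∀ x, HasDerivWithinAt f (f x * r x) (Set.Ici x) x := by
      intro x
      have hexp : HasDerivAt Real.exp (Real.exp (Real.log (f x))) (Real.log (f x)) :=
        Real.hasDerivAt_exp _
      have := hexp.comp_hasDerivWithinAt x (hrd x)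
      have hfeq : (Real.exp ∘ fun y => Real.log (f y)) = f := by
        funext y; exact Real.exp_log (hf_pos y)
      rw [Real.exp_log (hf_pos x), hfeq] at this
      exact this
    apply convexOn_of_right_deriv_mono _ (fun v => r (xOf v))
      (hf_cont.comp hxcont) (fun v w hvw => hrm (hxmono.monotone hvw))
    intro v
    have hcomp := (hfd (xOf v)).comp v (hxd v).hasDerivWithinAt
      (fun t ht => hxmono.monotone (Set.mem_Ici.1 ht) : Set.MapsTo xOf (Set.Ici v)
        (Set.Ici (xOf v)))
    have : f (xOf v) * r (xOf v) * (f (xOf v))⁻¹ = r (xOf v) := by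
      rw [mul_comm (f (xOf v)) (r (xOf v)), mul_inv_cancel_right₀ (ne_of_gt (hf_pos _))]
    rw [this] at hcomp
    exact hcomp
  · -- convex in volume coordinate ⇒ log-convex
    intro hg
    obtain ⟨r, hrm, hrd⟩ := exists_right_deriv_of_convexOn _ hg
    apply convexOn_of_right_deriv_mono _ (fun x => r (V x))
      (hf_cont.log (fun x => ne_of_gt (hf_pos x)))
      (fun x y hxy => hrm (hVmono.monotone hxy))
    intro x
    have hGV : HasDerivWithinAt (fun t => f (xOf (V t))) (r (V x) * f x) (Set.Ici x) x :=
      (hrd (V x)).comp x (hVd x).hasDerivWithinAt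
        (fun t ht => hVmono.monotone (Set.mem_Ici.1 ht) : Set.MapsTo V (Set.Ici x)
          (Set.Ici (V x)))
    have hGeq : (fun t => f (xOf (V t))) = f := by
      funext t; rw [hleft]
    rw [hGeq] at hGV
    have hlog : HasDerivAt Real.log (f x)⁻¹ (f x) := Real.hasDerivAt_log (ne_of_gt (hf_pos x))
    have hcomp := hlog.comp_hasDerivWithinAt x hGV
    have : (f x)⁻¹ * (r (V x) * f x) = r (V x) := by
      rw [mul_comm, mul_inv_cancel_right₀ (ne_of_gt (hf_pos _))]
    rw [this] at hcomp
    exact hcomp
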